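/- Let p be the transition matrix of an irreducible Markov chain on a countable state space A and fix x ∈ A. Then μ_x(τ_x = ∞) = (E^x[V_x])⁻¹, where E^x[V_x] = ∫ V_x dμ_x ∈ [0,∞] and the inverse is taken in [0,∞] with the convention 1/∞ = 0. In particular, μ_x(τ_x = ∞) = 0 if and only if E^x[V_x] = ∞. -/

import Mathlib

open MeasureTheory
open scoped ENNReal

/-- The `n`-step transition probabilities (entries of the `n`-th matrix power of `p`)
on a countable state space. -/
noncomputable def matPow {A : Type*} [DecidableEq A] (p : A → A → ℝ) : ℕ → A → A → ℝ
  | 0 => fun x y => if x = y then 1 else 0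
  | n + 1 => fun x y => ∑' z, matPow p n x z * p z y

/-- `V_y(ω) = #{n ≥ 0 : ω_n = y} ∈ ℕ ∪ {∞}`, the total number of visits of the path `ω`
to the state `y` (as an element of `ℝ≥0∞`). -/
noncomputable def visitCount {A : Type*} (y : A) (ω : ℕ → A) : ℝ≥0∞ :=
  ∑' n : ℕ, ({y} : Set A).indicator (fun _ => 1) (ω n)

set_option linter.unusedSectionVars false
set_option linter.unusedVariables false
set_option maxHeartbeats 1000000

open Set

lemma mcNatVal (b : ℕ → ℝ≥0∞) (hb : ∀ j, b j = 0 ∨ b j = 1) :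
    (∑' j, b j) = ⊤ ∨ ∃ N : ℕ, (∑' j, b j) = N := by
  by_cases h : (∑' j, b j) = ⊤
  · exact Or.inl h
  right
  have hfin : (Function.support b).Finite := by
    by_contra hinf
    rw [← Set.not_infinite, not_not] at hinf
    obtain ⟨n, hn⟩ := ENNReal.exists_nat_gt h
    obtain ⟨F, hFs, hFc⟩ := Set.Infinite.exists_subset_card_eq hinf n
    have h1 : (n : ℝ≥0∞) ≤ ∑' j, b j := by
      calc (n : ℝ≥0∞) = ∑ j ∈ F, b j := by
            rw [Finset.sum_congr rfl (fun j hj => ?_), Finset.sum_const, nsmul_eq_mul,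
              mul_one, hFc]
            rcases hb j with h0 | h1
            · exact absurd h0 (hFs hj)
            · exact h1
        _ ≤ ∑' j, b j := ENNReal.sum_le_tsum F
    exact absurd h1 (not_le.mpr hn)
  refine ⟨hfin.toFinset.card, ?_⟩
  rw [tsum_eq_sum (s := hfin.toFinset) (fun j hj => by
    simpa [Function.mem_support, not_not] using fun h' => hj (hfin.mem_toFinset.mpr h'))]
  rw [Finset.sum_congr rfl (fun j hj => ?_), Finset.sum_const, nsmul_eq_mul, mul_one]
  rcases hb j with h0 | h1
  · exact absurd (hfin.mem_toFinset.mp hj) (by simp [Function.mem_support, h0])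
  · exact h1

lemma mcLtIff (b : ℕ → ℝ≥0∞) (hb : ∀ j, b j = 0 ∨ b j = 1) (m : ℕ) :
    ((m : ℝ≥0∞) < ∑' j, b j) ↔ (((m + 1 : ℕ) : ℝ≥0∞) ≤ ∑' j, b j) := by
  rcases mcNatVal b hb with h | ⟨N, h⟩
  · rw [h]
    simp [ENNReal.natCast_lt_top]
  · rw [h]
    constructor
    · intro hlt
      have : m < N := by exact_mod_cast hlt
      exact_mod_cast this
    · intro hle
      have : m + 1 ≤ N := by exact_mod_cast hle
      exact_mod_cast Nat.lt_of_succ_le this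

lemma mcCount (b : ℕ → ℝ≥0∞) (hb : ∀ j, b j = 0 ∨ b j = 1) :
    (∑' m : ℕ, (if ((m : ℝ≥0∞) < ∑' j, b j) then (1 : ℝ≥0∞) else 0)) = ∑' j, b j := by
  rcases mcNatVal b hb with h | ⟨N, h⟩
  · rw [h]
    have : ∀ m : ℕ, (if ((m : ℝ≥0∞) < (⊤ : ℝ≥0∞)) then (1 : ℝ≥0∞) else 0) = 1 := by
      intro m; simp [ENNReal.natCast_lt_top]
    rw [tsum_congr this]
    exact ENNReal.tsum_const_eq_top_of_ne_zero one_ne_zero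
  · rw [h, tsum_eq_sum (s := Finset.range N) (fun m hm => ?_)]
    · rw [Finset.sum_congr rfl (fun m hm => ?_), Finset.sum_const, nsmul_eq_mul, mul_one,
        Finset.card_range]
      have : m < N := Finset.mem_range.mp hm
      simp [show ((m : ℝ≥0∞) < N) from by exact_mod_cast this]
    · have : ¬ (m < N) := fun h' => hm (Finset.mem_range.mpr h')
      simp [show ¬((m : ℝ≥0∞) < N) from by exact_mod_cast this]


section MCAux
variable {A : Type*} [Countable A] [Nonempty A] [DecidableEq A]
  [MeasurableSpace A] [MeasurableSingletonClass A]

def mcCyl (n : ℕ) (a : ℕ → A) : Set (ℕ → A) := {ω | ∀ i ≤ n, ω i = a i}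

def mcCylSet (A : Type*) : Set (Set (ℕ → A)) := {s | ∃ n a, s = mcCyl n a}

def mcShift (n : ℕ) : (ℕ → A) → (ℕ → A) := fun ω j => ω (j + n)

lemma mcShift_meas (n : ℕ) : Measurable (mcShift (A := A) n) :=
  measurable_pi_lambda _ (fun j => measurable_pi_apply _)

lemma mcCyl_meas (n : ℕ) (a : ℕ → A) : MeasurableSet (mcCyl n a) := by
  have : mcCyl n a = ⋂ i ∈ Finset.Iic n, (fun ω : ℕ → A => ω i) ⁻¹' {a i} := by
    ext ω; simp [mcCyl]
  rw [this]
  exact MeasurableSet.biInter (Finset.Iic n).countable_toSet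
    (fun i _ => measurable_pi_apply i (measurableSet_singleton _))

lemma mcCyl_inter_of_le {n m : ℕ} (h : n ≤ m) {a b : ℕ → A}
    (hne : (mcCyl n a ∩ mcCyl m b).Nonempty) : mcCyl n a ∩ mcCyl m b = mcCyl m b := by
  obtain ⟨ω, hωa, hωb⟩ := hne
  ext ω'
  refine ⟨fun h' => h'.2, fun h' => ⟨fun i hi => ?_, h'⟩⟩
  rw [h' i (hi.trans h), ← hωb i (hi.trans h), hωa i hi]

lemma mcPiSystem : IsPiSystem (mcCylSet A) := by
  rintro s ⟨n, a, rfl⟩ t ⟨m, b, rfl⟩ hne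
  rcases le_total n m with h | h
  · exact ⟨m, b, by rw [mcCyl_inter_of_le h hne]⟩
  · rw [inter_comm] at hne ⊢
    exact ⟨n, a, by rw [mcCyl_inter_of_le h hne]⟩

def mcExt (n : ℕ) (b : Fin (n + 1) → A) : ℕ → A :=
  fun i => b ⟨min i n, Nat.lt_succ_of_le (min_le_right i n)⟩

lemma mcExt_eq {n : ℕ} (b : Fin (n + 1) → A) {i : ℕ} (h : i ≤ n) :
    mcExt n b i = b ⟨i, Nat.lt_succ_of_le h⟩ := by
  simp [mcExt, Nat.min_eq_left h]

lemma mcEval_eq_iUnion (n : ℕ) (y : A) :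
    {ω : ℕ → A | ω n = y} =
      ⋃ b : {b : Fin (n + 1) → A // b ⟨n, Nat.lt_succ_of_le le_rfl⟩ = y},
        mcCyl n (mcExt n b.1) := by
  ext ω
  simp only [mem_setOf_eq, mem_iUnion]
  constructor
  · intro hω
    refine ⟨⟨fun i => ω i, hω⟩, fun i hi => ?_⟩
    rw [mcExt_eq _ hi]
  · rintro ⟨b, hb⟩
    rw [hb n le_rfl, mcExt_eq _ le_rfl, b.2]

lemma mcGenerate :
    (inferInstance : MeasurableSpace (ℕ → A)) = MeasurableSpace.generateFrom (mcCylSet A) := by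
  refine le_antisymm ?_ ?_
  · rw [show (inferInstance : MeasurableSpace (ℕ → A)) = MeasurableSpace.pi from rfl,
      MeasurableSpace.pi]
    refine iSup_le fun n => ?_
    rw [MeasurableSpace.comap_le_iff_le_map]
    intro s _
    -- show preimage of s under eval n is in generateFrom
    have : (fun ω : ℕ → A => ω n) ⁻¹' s = ⋃ y : s, {ω : ℕ → A | ω n = y.1} := by
      ext ω; simp
    rw [MeasurableSpace.map_def, this]
    refine MeasurableSet.iUnion fun y => ?_
    rw [mcEval_eq_iUnion]
    exact MeasurableSet.iUnion fun b =>
      MeasurableSpace.measurableSet_generateFrom ⟨n, mcExt n b.1, rfl⟩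
  · exact MeasurableSpace.generateFrom_le (by rintro s ⟨n, a, rfl⟩; exact mcCyl_meas n a)

lemma mcPartition (n : ℕ) (ν : Measure (ℕ → A)) (W : Set (ℕ → A)) (hW : MeasurableSet W) :
    ν W = ∑' b : Fin (n + 1) → A, ν (mcCyl n (mcExt n b) ∩ W) := by
  have hcover : W = ⋃ b : Fin (n + 1) → A, (mcCyl n (mcExt n b) ∩ W) := by
    ext ω
    simp only [mem_iUnion, mem_inter_iff]
    constructor
    · intro hω
      exact ⟨fun i => ω i, fun i hi => by rw [mcExt_eq _ hi], hω⟩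
    · rintro ⟨b, _, hω⟩; exact hω
  have hdisj : Pairwise (Function.onFun Disjoint
      (fun b : Fin (n + 1) → A => mcCyl n (mcExt n b) ∩ W)) := by
    intro b b' hbb'
    refine Set.disjoint_left.mpr ?_
    rintro ω ⟨h1, _⟩ ⟨h2, _⟩
    apply hbb'
    funext i
    have hi : (i : ℕ) ≤ n := Nat.lt_succ_iff.mp i.2
    have e1 := h1 i hi
    have e2 := h2 i hi
    rw [mcExt_eq _ hi] at e1 e2
    have e3 := e1.symm.trans e2
    simpa using e3
  conv_lhs => rw [hcover]
  exact measure_iUnion hdisj (fun b => ((mcCyl_meas n (mcExt n b)).inter hW))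


lemma mcMarkov (p : A → A → ℝ) (hnn : ∀ x y, 0 ≤ p x y)
    (μ : A → Measure (ℕ → A)) (hprob : ∀ x, IsProbabilityMeasure (μ x))
    (hμ : ∀ (x : A) (n : ℕ) (a : ℕ → A),
      μ x (mcCyl n a) =
        ENNReal.ofReal ((if a 0 = x then (1 : ℝ) else 0) *
          ∏ i ∈ Finset.range n, p (a i) (a (i + 1))))
    (x : A) (n : ℕ) (a : ℕ → A) (E : Set (ℕ → A)) (hE : MeasurableSet E) :
    μ x (mcCyl n a ∩ mcShift n ⁻¹' E) = μ x (mcCyl n a) * μ (a n) E := by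
  haveI := hprob x
  haveI := hprob (a n)
  have hcylval := hμ x n a
  set ν₁ : Measure (ℕ → A) := ((μ x).restrict (mcCyl n a)).map (mcShift n) with hν₁
  set ν₂ : Measure (ℕ → A) := (μ x (mcCyl n a)) • μ (a n) with hν₂
  have hν₁app : ∀ (F : Set (ℕ → A)), MeasurableSet F →
      ν₁ F = μ x (mcShift n ⁻¹' F ∩ mcCyl n a) := by
    intro F hF
    rw [hν₁, Measure.map_apply (mcShift_meas n) hF,
      Measure.restrict_apply ((mcShift_meas n) hF)]
  haveI : IsFiniteMeasure ν₁ := by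
    constructor
    rw [hν₁, Measure.map_apply (mcShift_meas n) MeasurableSet.univ, preimage_univ,
      Measure.restrict_apply_univ]
    exact lt_of_le_of_lt prob_le_one ENNReal.one_lt_top
  have key : ν₁ = ν₂ := by
    refine ext_of_generate_finite (mcCylSet A) mcGenerate mcPiSystem ?_ ?_
    · rintro s ⟨m, b, rfl⟩
      rw [hν₁app _ (mcCyl_meas m b), hν₂, Measure.smul_apply, smul_eq_mul]
      by_cases hb0 : b 0 = a n
      · set c : ℕ → A := fun i => if i ≤ n then a i else b (i - n) with hc
        have hca : ∀ i ≤ n, c i = a i := fun i hi => if_pos hi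
        have hcb : ∀ j ≤ m, c (n + j) = b j := by
          intro j hj
          by_cases hj0 : j = 0
          · subst hj0; simpa [hc] using hb0.symm
          · have h1 : ¬ (n + j ≤ n) := by omega
            simp [hc, h1]
        have hset : mcShift n ⁻¹' mcCyl m b ∩ mcCyl n a = mcCyl (n + m) c := by
          ext ω
          constructor
          · rintro ⟨hpre, hcyl⟩ i hi
            by_cases h1 : i ≤ n
            · rw [hcyl i h1, hca i h1]
            · have h2 : i - n ≤ m := by omega
              have h3 : (i - n) + n = i := by omega
              have := hpre (i - n) h2
              have hc2 : c i = b (i - n) := by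
                rw [← hcb (i - n) h2, show n + (i - n) = i by omega]
              have h4 : ω ((i - n) + n) = ω i := congrArg ω h3
              rw [hc2, ← h4]
              exact this
          · intro h
            refine ⟨fun j hj => ?_, fun i hi => ?_⟩
            · have h1 : j + n ≤ n + m := by omega
              have := h (j + n) h1
              rw [show mcShift n ω j = ω (j + n) from rfl, this,
                show j + n = n + j by omega, hcb j hj]
            · rw [h i (by omega), hca i hi]
        rw [hset, hμ x (n + m) c, hcylval, hμ (a n) m b]
        have hc0 : c 0 = a 0 := hca 0 (Nat.zero_le n)
        have hprod : ∏ i ∈ Finset.range (n + m), p (c i) (c (i + 1)) =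
            (∏ i ∈ Finset.range n, p (a i) (a (i + 1))) *
              ∏ j ∈ Finset.range m, p (b j) (b (j + 1)) := by
          rw [Finset.prod_range_add]
          congr 1
          · refine Finset.prod_congr rfl fun i hi => ?_
            have h2 : i + 1 ≤ n := Finset.mem_range.mp hi
            rw [hca i (by omega), hca _ h2]
          · refine Finset.prod_congr rfl fun j hj => ?_
            have h2 : j + 1 ≤ m := Finset.mem_range.mp hj
            rw [show n + j + 1 = n + (j + 1) by omega, hcb j (by omega), hcb _ h2]
        rw [hprod, hc0, if_pos hb0, one_mul]
        rw [← ENNReal.ofReal_mul (mul_nonneg (by split <;> norm_num) (Finset.prod_nonneg fun i _ => hnn _ _))]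
        · congr 1
          ring
      · have hempty : mcShift n ⁻¹' mcCyl m b ∩ mcCyl n a = ∅ := by
          ext ω
          simp only [mem_inter_iff, mem_empty_iff_false, iff_false, not_and]
          intro hpre hcyl
          apply hb0
          have h1 := hpre 0 (Nat.zero_le m)
          have h2 := hcyl n le_rfl
          rw [show mcShift n ω 0 = ω (0 + n) from rfl, zero_add, h2] at h1
          exact h1.symm
        rw [hempty, measure_empty, hμ (a n) m b, if_neg hb0, zero_mul,
          ENNReal.ofReal_zero, mul_zero]
    · rw [hν₁app _ MeasurableSet.univ, preimage_univ, univ_inter, hν₂,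
        Measure.smul_apply, smul_eq_mul, measure_univ, mul_one]
  calc μ x (mcCyl n a ∩ mcShift n ⁻¹' E) = ν₁ E := by
        rw [hν₁app _ hE, inter_comm]
    _ = μ x (mcCyl n a) * μ (a n) E := by
        rw [key, hν₂, Measure.smul_apply, smul_eq_mul]


noncomputable def mcg [DecidableEq A] (x : A) (ω : ℕ → A) : ℝ≥0∞ :=
  ∑' j : ℕ, (if ω (j + 1) = x then (1 : ℝ≥0∞) else 0)

def mcT (x : A) (k : ℕ) : Set (ℕ → A) :=
  {ω | (∀ j, 1 ≤ j → j ≤ k → ω j ≠ x) ∧ ω (k + 1) = x}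

noncomputable def mcH (x : A) (m : ℕ) : Set (ℕ → A) := {ω | (m : ℝ≥0∞) ≤ mcg x ω}

lemma mcCoord_meas (j : ℕ) (y : A) : MeasurableSet {ω : ℕ → A | ω j = y} := by
  have : {ω : ℕ → A | ω j = y} = (fun ω : ℕ → A => ω j) ⁻¹' {y} := by ext ω; simp
  rw [this]
  exact measurable_pi_apply j (measurableSet_singleton y)

lemma mcg_meas (x : A) : Measurable (mcg x) :=
  Measurable.ennreal_tsum fun j =>
    Measurable.ite (mcCoord_meas (j + 1) x) measurable_const measurable_const

lemma mcT_meas (x : A) (k : ℕ) : MeasurableSet (mcT x k) := by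
  have : mcT x k = (⋂ j ∈ Set.Icc 1 k, {ω : ℕ → A | ω j = x}ᶜ) ∩ {ω | ω (k + 1) = x} := by
    ext ω
    simp only [mcT, mem_setOf_eq, mem_inter_iff, mem_iInter, mem_compl_iff, Set.mem_Icc]
    constructor
    · rintro ⟨h1, h2⟩; exact ⟨fun j hj => h1 j hj.1 hj.2, h2⟩
    · rintro ⟨h1, h2⟩; exact ⟨fun j hj1 hj2 => h1 j ⟨hj1, hj2⟩, h2⟩
  rw [this]
  exact ((MeasurableSet.biInter (Set.to_countable _)
    (fun j _ => (mcCoord_meas j x).compl)).inter (mcCoord_meas (k + 1) x))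

lemma mcH_meas (x : A) (m : ℕ) : MeasurableSet (mcH x m) :=
  mcg_meas x measurableSet_Ici

lemma mcT_disj (x : A) : Pairwise (Function.onFun Disjoint (mcT x)) := by
  intro k k' hkk'
  rcases Nat.lt_or_ge k k' with h | h
  · refine Set.disjoint_left.mpr ?_
    rintro ω ⟨_, h2⟩ ⟨h1', _⟩
    exact h1' (k + 1) (by omega) (by omega) h2
  · have h' : k' < k := by omega
    refine Set.disjoint_left.mpr ?_
    rintro ω ⟨h1, _⟩ ⟨_, h2'⟩
    exact h1 (k' + 1) (by omega) (by omega) h2'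

lemma mcg_split (x : A) (ω : ℕ → A) (k : ℕ)
    (hk : ∀ j, 1 ≤ j → j ≤ k → ω j ≠ x) (hx : ω (k + 1) = x) :
    mcg x ω = 1 + mcg x (mcShift (k + 1) ω) := by
  unfold mcg
  rw [← Summable.sum_add_tsum_nat_add' (f := fun j => if ω (j + 1) = x then (1 : ℝ≥0∞) else 0)
    (k := k + 1) ENNReal.summable]
  congr 1
  · rw [Finset.sum_eq_single k]
    · simp [hx]
    · intro j hj hjk
      have hjx : ω (j + 1) ≠ x := hk (j + 1) (by omega)
        (by have := Finset.mem_range.mp hj; omega)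
      simp [hjx]
    · intro h; exact absurd (Finset.self_mem_range_succ k) h
  · refine tsum_congr fun j => ?_
    rw [show mcShift (k + 1) ω (j + 1) = ω ((j + 1) + (k + 1)) from rfl,
      show j + (k + 1) + 1 = (j + 1) + (k + 1) by omega]

lemma mcT_of_hit (x : A) (ω : ℕ → A) (h : ∃ j : ℕ, ω (j + 1) = x) :
    ∃ k, ω ∈ mcT x k := by
  classical
  refine ⟨Nat.find h, fun j hj1 hjk => ?_, Nat.find_spec h⟩
  have := Nat.find_min h (m := j - 1) (by omega)
  rwa [show j - 1 + 1 = j by omega] at this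

lemma mcH_decomp (x : A) (m : ℕ) :
    mcH x (m + 1) = ⋃ k : ℕ, (mcT x k ∩ mcShift (k + 1) ⁻¹' mcH x m) := by
  ext ω
  simp only [mcH, mem_setOf_eq, mem_iUnion, mem_inter_iff, mem_preimage]
  constructor
  · intro hω
    have hpos : ∃ j : ℕ, ω (j + 1) = x := by
      by_contra hno
      push_neg at hno
      have : mcg x ω = 0 := by
        unfold mcg
        refine ENNReal.tsum_eq_zero.mpr fun j => by simp [hno j]
      rw [this, le_zero_iff] at hω
      have h0 : m + 1 = 0 := by exact_mod_cast hω
      omega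
    obtain ⟨k, hkT⟩ := mcT_of_hit x ω hpos
    refine ⟨k, hkT, ?_⟩
    have hsplit := mcg_split x ω k hkT.1 hkT.2
    rw [hsplit] at hω
    have : ((m : ℝ≥0∞)) + 1 ≤ 1 + mcg x (mcShift (k + 1) ω) := by
      convert hω using 2
      push_cast
      ring
    rw [add_comm (m : ℝ≥0∞) 1] at this
    exact (ENNReal.add_le_add_iff_left ENNReal.one_ne_top).mp this
  · rintro ⟨k, hkT, hH⟩
    have hsplit := mcg_split x ω k hkT.1 hkT.2
    rw [hsplit]
    calc ((m + 1 : ℕ) : ℝ≥0∞) = 1 + (m : ℝ≥0∞) := by push_cast; ring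
      _ ≤ 1 + mcg x (mcShift (k + 1) ω) := by gcongr


lemma mcMarkovSet (p : A → A → ℝ) (hnn : ∀ x y, 0 ≤ p x y)
    (μ : A → Measure (ℕ → A)) (hprob : ∀ x, IsProbabilityMeasure (μ x))
    (hμ : ∀ (x : A) (n : ℕ) (a : ℕ → A),
      μ x (mcCyl n a) =
        ENNReal.ofReal ((if a 0 = x then (1 : ℝ) else 0) *
          ∏ i ∈ Finset.range n, p (a i) (a (i + 1))))
    (x y : A) (n : ℕ) (S : Set (ℕ → A))
    (hS : ∀ ω ω' : ℕ → A, (∀ i ≤ n, ω i = ω' i) → ω ∈ S → ω' ∈ S)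
    (hSy : ∀ ω ∈ S, ω n = y) (hSmeas : MeasurableSet S)
    (E : Set (ℕ → A)) (hE : MeasurableSet E) :
    μ x (S ∩ mcShift n ⁻¹' E) = μ x S * μ y E := by
  rw [mcPartition n (μ x) (S ∩ mcShift n ⁻¹' E) (hSmeas.inter ((mcShift_meas n) hE)),
    mcPartition n (μ x) S hSmeas, ← ENNReal.tsum_mul_right]
  refine tsum_congr fun b => ?_
  by_cases hbS : mcExt n b ∈ S
  · have hsub : mcCyl n (mcExt n b) ⊆ S := fun ω hω =>
      hS (mcExt n b) ω (fun i hi => (hω i hi).symm) hbS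
    have h1 : mcCyl n (mcExt n b) ∩ S = mcCyl n (mcExt n b) := inter_eq_left.mpr hsub
    have h2 : mcCyl n (mcExt n b) ∩ (S ∩ mcShift n ⁻¹' E)
        = mcCyl n (mcExt n b) ∩ mcShift n ⁻¹' E := by
      rw [← inter_assoc, h1]
    rw [h2, h1, mcMarkov p hnn μ hprob hμ x n (mcExt n b) E hE, hSy _ hbS]
  · have h1 : mcCyl n (mcExt n b) ∩ S = ∅ := by
      refine eq_empty_iff_forall_notMem.mpr fun ω hω => hbS ?_
      exact hS ω (mcExt n b) (fun i hi => (hω.1 i hi)) hω.2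
    have h2 : mcCyl n (mcExt n b) ∩ (S ∩ mcShift n ⁻¹' E) = ∅ := by
      rw [← inter_assoc, h1, empty_inter]
    rw [h1, h2, measure_empty, zero_mul]


end MCAux

/-- For an irreducible Markov chain with stochastic transition matrix `p` on a
countable state space `A`, whose laws `μ_x` (started at `x`) are characterized by the usual
finite-dimensional (cylinder) formula, one has for every `x ∈ A`:
`μ_x(τ_x = ∞) = (E^x[V_x])⁻¹` (inverse in `[0,∞]`, with `1/∞ = 0`); in particular
`μ_x(τ_x = ∞) = 0 ↔ E^x[V_x] = ∞`. Here `τ_x = inf{k ≥ 1 : X_k = x}` and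
`E^x[V_x] = ∫ V_x dμ_x`. -/
theorem stmt_0 {A : Type*} [Countable A] [Nonempty A] [DecidableEq A]
    [MeasurableSpace A] [MeasurableSingletonClass A]
    (p : A → A → ℝ)
    (hnn : ∀ x y, 0 ≤ p x y) (hrow : ∀ x, HasSum (p x) 1)
    (μ : A → Measure (ℕ → A)) (hprob : ∀ x, IsProbabilityMeasure (μ x))
    (hμ : ∀ (x : A) (n : ℕ) (a : ℕ → A),
      μ x {ω | ∀ i ≤ n, ω i = a i} =
        ENNReal.ofReal ((if a 0 = x then (1 : ℝ) else 0) *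
          ∏ i ∈ Finset.range n, p (a i) (a (i + 1))))
    (hirr : ∀ x y : A, ∃ n : ℕ, 0 < matPow p n x y)
    (x : A) :
    μ x {ω | ∀ k : ℕ, 1 ≤ k → ω k ≠ x} = (∫⁻ ω, visitCount x ω ∂μ x)⁻¹ ∧
    (μ x {ω | ∀ k : ℕ, 1 ≤ k → ω k ≠ x} = 0 ↔ (∫⁻ ω, visitCount x ω ∂μ x) = ⊤) := by
  haveI := hprob x
  have hμ' : ∀ (x : A) (n : ℕ) (a : ℕ → A),
      μ x (mcCyl n a) =
        ENNReal.ofReal ((if a 0 = x then (1 : ℝ) else 0) *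
          ∏ i ∈ Finset.range n, p (a i) (a (i + 1))) := hμ
  set R : Set (ℕ → A) := ⋃ k : ℕ, mcT x k with hR
  have hRmeas : MeasurableSet R := MeasurableSet.iUnion fun k => mcT_meas x k
  have hbj : ∀ ω : ℕ → A, ∀ j : ℕ,
      (if ω (j + 1) = x then (1 : ℝ≥0∞) else 0) = 0 ∨
      (if ω (j + 1) = x then (1 : ℝ≥0∞) else 0) = 1 := by
    intro ω j; split <;> simp
  -- recurrence
  have hrec : ∀ m : ℕ, μ x (mcH x (m + 1)) = μ x R * μ x (mcH x m) := by
    intro m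
    rw [mcH_decomp x m]
    rw [measure_iUnion (fun k k' hkk' => Disjoint.mono inter_subset_left inter_subset_left
        (mcT_disj x hkk'))
      (fun k => (mcT_meas x k).inter ((mcShift_meas (k + 1)) (mcH_meas x m)))]
    have : ∀ k : ℕ, μ x (mcT x k ∩ mcShift (k + 1) ⁻¹' mcH x m)
        = μ x (mcT x k) * μ x (mcH x m) := by
      intro k
      refine mcMarkovSet p hnn μ hprob hμ' x x (k + 1) (mcT x k) ?_ ?_ (mcT_meas x k)
        (mcH x m) (mcH_meas x m)
      · rintro ω ω' hagree ⟨h1, h2⟩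
        exact ⟨fun j hj1 hjk => by rw [← hagree j (by omega)]; exact h1 j hj1 hjk,
          by rw [← hagree (k + 1) le_rfl]; exact h2⟩
      · rintro ω ⟨_, h2⟩; exact h2
    rw [tsum_congr this, ENNReal.tsum_mul_right, hR,
      measure_iUnion (mcT_disj x) (fun k => mcT_meas x k)]
  have hH0 : μ x (mcH x 0) = 1 := by
    have : mcH x 0 = univ := by
      ext ω; simp [mcH]
    rw [this, measure_univ]
  have hHm : ∀ m : ℕ, μ x (mcH x m) = (μ x R) ^ m := by
    intro m
    induction m with
    | zero => simpa using hH0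
    | succ k ih => rw [hrec k, ih, pow_succ]; ring
  -- integral of visitCount
  have hVg : ∀ ω : ℕ → A, visitCount x ω = (if ω 0 = x then (1 : ℝ≥0∞) else 0) + mcg x ω := by
    intro ω
    unfold visitCount mcg
    have h1 : ∀ n : ℕ, ({x} : Set A).indicator (fun _ => (1 : ℝ≥0∞)) (ω n)
        = if ω n = x then (1 : ℝ≥0∞) else 0 := fun n => by simp [Set.indicator_apply]
    rw [tsum_congr h1,
      ← Summable.sum_add_tsum_nat_add' (f := fun n => if ω n = x then (1 : ℝ≥0∞) else 0)
        (k := 1) ENNReal.summable]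
    rw [Finset.sum_range_one]
  have hindmeas : Measurable (fun ω : ℕ → A => if ω 0 = x then (1 : ℝ≥0∞) else 0) :=
    Measurable.ite (mcCoord_meas 0 x) measurable_const measurable_const
  have hcyl0 : μ x {ω : ℕ → A | ω 0 = x} = 1 := by
    have h1 : {ω : ℕ → A | ω 0 = x} = mcCyl 0 (fun _ => x) := by
      ext ω
      simp [mcCyl, Nat.le_zero]
    rw [h1, hμ' x 0 (fun _ => x)]
    simp
  have hint1 : ∫⁻ ω, (if ω 0 = x then (1 : ℝ≥0∞) else 0) ∂μ x = 1 := by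
    have h1 : (fun ω : ℕ → A => if ω 0 = x then (1 : ℝ≥0∞) else 0)
        = ({ω : ℕ → A | ω 0 = x}).indicator (fun _ => 1) := by
      funext ω; simp [Set.indicator_apply]
    rw [h1, lintegral_indicator (mcCoord_meas 0 x), setLIntegral_one, hcyl0]
  have hgint : ∫⁻ ω, mcg x ω ∂μ x = ∑' m : ℕ, μ x (mcH x (m + 1)) := by
    have hpt : ∀ ω : ℕ → A, mcg x ω
        = ∑' m : ℕ, (if ((m : ℝ≥0∞) < mcg x ω) then (1 : ℝ≥0∞) else 0) :=
      fun ω => (mcCount _ (hbj ω)).symm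
    have hmeas_m : ∀ m : ℕ,
        Measurable (fun ω : ℕ → A => if ((m : ℝ≥0∞) < mcg x ω) then (1 : ℝ≥0∞) else 0) := by
      intro m
      have hset : MeasurableSet {ω : ℕ → A | (m : ℝ≥0∞) < mcg x ω} := by
        have he : {ω : ℕ → A | (m : ℝ≥0∞) < mcg x ω} = (mcg x) ⁻¹' (Ioi (m : ℝ≥0∞)) := rfl
        rw [he]; exact (mcg_meas x) measurableSet_Ioi
      exact Measurable.ite hset measurable_const measurable_const
    rw [lintegral_congr hpt, lintegral_tsum (fun m => (hmeas_m m).aemeasurable)]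
    refine tsum_congr fun m => ?_
    have h1 : (fun ω : ℕ → A => if ((m : ℝ≥0∞) < mcg x ω) then (1 : ℝ≥0∞) else 0)
        = (mcH x (m + 1)).indicator (fun _ => 1) := by
      funext ω
      have hiff : ((m : ℝ≥0∞) < mcg x ω) ↔ ω ∈ mcH x (m + 1) := by
        simp only [mcH, mem_setOf_eq]
        exact mcLtIff _ (hbj ω) m
      by_cases hc : (m : ℝ≥0∞) < mcg x ω
      · rw [if_pos hc, Set.indicator_of_mem (hiff.mp hc)]
      · rw [if_neg hc, Set.indicator_of_notMem (fun hm => hc (hiff.mpr hm))]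
    rw [h1, lintegral_indicator (mcH_meas x (m + 1)), setLIntegral_one]
  have hVint : ∫⁻ ω, visitCount x ω ∂μ x = (1 - μ x R)⁻¹ := by
    rw [lintegral_congr hVg, lintegral_add_left hindmeas, hint1, hgint,
      tsum_congr (fun m => hHm (m + 1))]
    calc 1 + ∑' m : ℕ, (μ x R) ^ (m + 1)
        = ∑ i ∈ Finset.range 1, (μ x R) ^ i + ∑' m : ℕ, (μ x R) ^ (m + 1) := by simp
      _ = ∑' n : ℕ, (μ x R) ^ n :=
          Summable.sum_add_tsum_nat_add' (f := fun n => (μ x R) ^ n) (k := 1) ENNReal.summable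
      _ = (1 - μ x R)⁻¹ := ENNReal.tsum_geometric (μ x R)
  have hcompl : {ω : ℕ → A | ∀ k : ℕ, 1 ≤ k → ω k ≠ x} = Rᶜ := by
    ext ω
    simp only [mem_setOf_eq, mem_compl_iff, hR, mem_iUnion, not_exists]
    constructor
    · intro h k hk
      exact h (k + 1) (by omega) hk.2
    · intro h k hk1
      intro hkx
      obtain ⟨k', hk'⟩ := mcT_of_hit x ω ⟨k - 1, by rwa [show k - 1 + 1 = k by omega]⟩
      exact h k' hk'
  have hq : μ x {ω : ℕ → A | ∀ k : ℕ, 1 ≤ k → ω k ≠ x} = 1 - μ x R := by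
    rw [hcompl, measure_compl hRmeas (measure_ne_top _ _), measure_univ]
  have hfirst : μ x {ω : ℕ → A | ∀ k : ℕ, 1 ≤ k → ω k ≠ x}
      = (∫⁻ ω, visitCount x ω ∂μ x)⁻¹ := by
    rw [hq, hVint, inv_inv]
  exact ⟨hfirst, by rw [hfirst, ENNReal.inv_eq_zero]⟩
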